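/- Let p ≥ 1 and let A be a real symmetric p×p matrix. Let w₁, …, w_p be an orthonormal basis of eigenvectors of A with corresponding real eigenvalues λ₁, …, λ_p, indexed so that |λ₁| ≥ |λ₂| ≥ … ≥ |λ_p|. Then the nuclear norm of the rank-one deflation satisfies ‖A − λ₁·w₁w₁ᵀ‖₊ ≤ (1 − 1/p)·‖A‖₊. -/

import Mathlib

open Matrix

/-- The nuclear norm (trace norm) of a real square matrix: the sum of its singular
values, i.e. the sum of the square roots of the eigenvalues of `Aᵀ * A = Aᴴ * A`. -/
noncomputable def nuclearNorm {p : ℕ} (A : Matrix (Fin p) (Fin p) ℝ) : ℝ :=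
  ∑ i, Real.sqrt ((Matrix.isHermitian_conjTranspose_mul_self A).eigenvalues i)

open Polynomial

variable {p : ℕ}

lemma charpoly_conj_orth (U D : Matrix (Fin p) (Fin p) ℝ) (h1 : Uᵀ * U = 1) :
    (U * D * Uᵀ).charpoly = D.charpoly := by
  have h2 : U * Uᵀ = 1 := mul_eq_one_comm.mp h1
  set f : Matrix (Fin p) (Fin p) ℝ →+* Matrix (Fin p) (Fin p) (Polynomial ℝ) :=
      (Polynomial.C : ℝ →+* Polynomial ℝ).mapMatrix with hf
  have hsc : ∀ M : Matrix (Fin p) (Fin p) (Polynomial ℝ),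
      M * Matrix.scalar (Fin p) (X : Polynomial ℝ) = Matrix.scalar (Fin p) X * M :=
    fun M => ((scalar_commute (X : Polynomial ℝ) (fun r => Commute.all _ _) M).eq).symm
  have key : charmatrix (U * D * Uᵀ) = f U * charmatrix D * f Uᵀ := by
    rw [charmatrix, charmatrix, mul_sub, sub_mul]
    congr 1
    · rw [hsc (f U), mul_assoc, ← map_mul f, h2, _root_.map_one, mul_one]
    · rw [map_mul f, map_mul f]
  rw [Matrix.charpoly, key, det_mul, det_mul, Matrix.charpoly]
  have : (f U).det * (f Uᵀ).det = 1 := by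
    rw [← det_mul, ← map_mul f, h2, _root_.map_one, det_one]
  linear_combination (charmatrix D).det * this

lemma charpoly_eq_prod_of_eigenbasis (M : Matrix (Fin p) (Fin p) ℝ)
    (v : Fin p → Fin p → ℝ) (μ : Fin p → ℝ)
    (horth : ∀ i j, v i ⬝ᵥ v j = if i = j then (1 : ℝ) else 0)
    (hev : ∀ i, M *ᵥ v i = μ i • v i) :
    M.charpoly = ∏ i, (X - C (μ i)) := by
  set U : Matrix (Fin p) (Fin p) ℝ := Matrix.of fun i j => v j i with hU
  have hUo : Uᵀ * U = 1 := by
    ext i j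
    have := horth i j
    simpa [Matrix.mul_apply, Matrix.one_apply, hU, dotProduct] using this
  have hU2 : U * Uᵀ = 1 := mul_eq_one_comm.mp hUo
  have hMU : M * U = U * Matrix.diagonal μ := by
    ext i j
    have h := congrFun (hev j) i
    simp only [Matrix.mulVec, dotProduct, Pi.smul_apply, smul_eq_mul] at h
    simp [Matrix.mul_apply, hU, Matrix.diagonal_apply, mul_ite, mul_zero,
      Finset.sum_ite_eq, h, mul_comm]
  have hM : M = U * Matrix.diagonal μ * Uᵀ := by
    calc M = M * (U * Uᵀ) := by rw [hU2, mul_one]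
    _ = (M * U) * Uᵀ := by rw [mul_assoc]
    _ = U * Matrix.diagonal μ * Uᵀ := by rw [hMU]
  rw [hM, charpoly_conj_orth _ _ hUo,
    Matrix.charpoly_of_upperTriangular _ (Matrix.blockTriangular_diagonal μ)]
  simp

lemma sum_f_eigenvalues_eq (M : Matrix (Fin p) (Fin p) ℝ) (hM : M.IsHermitian)
    (v : Fin p → Fin p → ℝ) (μ : Fin p → ℝ)
    (horth : ∀ i j, v i ⬝ᵥ v j = if i = j then (1 : ℝ) else 0)
    (hev : ∀ i, M *ᵥ v i = μ i • v i) (f : ℝ → ℝ) :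
    ∑ i, f (hM.eigenvalues i) = ∑ i, f (μ i) := by
  have h1 : M.charpoly = ∏ i, (X - C (hM.eigenvalues i)) := by
    apply charpoly_eq_prod_of_eigenbasis M (fun i => ⇑(hM.eigenvectorBasis i)) hM.eigenvalues
    · intro i j
      have h := (orthonormal_iff_ite.mp hM.eigenvectorBasis.orthonormal) i j
      simpa [PiLp.inner_apply, dotProduct, mul_comm] using h
    · intro i
      exact hM.mulVec_eigenvectorBasis i
  have h2 := charpoly_eq_prod_of_eigenbasis M v μ horth hev
  have hms : Finset.univ.val.map hM.eigenvalues = Finset.univ.val.map μ := by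
    have hp2 : ((Finset.univ.val.map hM.eigenvalues).map fun r => X - C r).prod
        = ((Finset.univ.val.map μ).map fun r => X - C r).prod := by
      rw [Multiset.map_map, Multiset.map_map]
      rw [← Finset.prod_eq_multiset_prod, ← Finset.prod_eq_multiset_prod]
      exact h1.symm.trans h2
    have := congrArg Polynomial.roots hp2
    rwa [roots_multiset_prod_X_sub_C, roots_multiset_prod_X_sub_C] at this
  calc ∑ i, f (hM.eigenvalues i) = ((Finset.univ.val.map hM.eigenvalues).map f).sum := by
        rw [Multiset.map_map]; rfl
  _ = ((Finset.univ.val.map μ).map f).sum := by rw [hms]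
  _ = ∑ i, f (μ i) := by rw [Multiset.map_map]; rfl

theorem nuclear_norm_rank_one_deflation (p : ℕ) (hp : 1 ≤ p)
    (A : Matrix (Fin p) (Fin p) ℝ) (hA : A.IsSymm)
    (w : Fin p → (Fin p → ℝ)) (lam : Fin p → ℝ)
    (hortho : ∀ i j, w i ⬝ᵥ w j = if i = j then (1 : ℝ) else 0)
    (heig : ∀ i, A.mulVec (w i) = lam i • w i)
    (hord : ∀ i j : Fin p, i ≤ j → |lam j| ≤ |lam i|) :
    nuclearNorm
        (A - lam ⟨0, by omega⟩ •
          Matrix.vecMulVec (w ⟨0, by omega⟩) (w ⟨0, by omega⟩)) ≤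
      (1 - 1 / (p : ℝ)) * nuclearNorm A := by
  have hAt : Aᵀ = A := hA
  set z : Fin p := ⟨0, by omega⟩ with hz
  set B : Matrix (Fin p) (Fin p) ℝ := A - lam z • Matrix.vecMulVec (w z) (w z) with hB
  have hvvt : (Matrix.vecMulVec (w z) (w z))ᵀ = Matrix.vecMulVec (w z) (w z) := by
    ext i j
    simp [Matrix.vecMulVec_apply, Matrix.transpose_apply, mul_comm]
  have hBt : Bᵀ = B := by
    rw [hB, transpose_sub, transpose_smul, hAt, hvvt]
  -- action of vecMulVec
  have hvv : ∀ x : Fin p → ℝ, Matrix.vecMulVec (w z) (w z) *ᵥ x = (w z ⬝ᵥ x) • w z := by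
    intro x
    ext i
    simp only [Matrix.mulVec, Matrix.vecMulVec_apply, dotProduct, Pi.smul_apply,
      smul_eq_mul, Finset.sum_mul, Finset.mul_sum]
    exact Finset.sum_congr rfl fun k _ => by ring
  set μB : Fin p → ℝ := fun i => if i = z then 0 else lam i with hμB
  have hBev : ∀ i, B *ᵥ w i = μB i • w i := by
    intro i
    rw [hB, Matrix.sub_mulVec, Matrix.smul_mulVec, hvv, hortho, heig]
    by_cases h : i = z
    · subst h; simp [hμB]
    · rw [if_neg (fun hh => h hh.symm)]
      simp [hμB, if_neg h]
  -- eigen-actions of the Gram matrices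
  have hAev2 : ∀ i, (Aᵀ * A) *ᵥ w i = (lam i ^ 2) • w i := by
    intro i
    rw [hAt, ← Matrix.mulVec_mulVec, heig, Matrix.mulVec_smul, heig, smul_smul]
    ring_nf
  have hBev2 : ∀ i, (Bᵀ * B) *ᵥ w i = (μB i ^ 2) • w i := by
    intro i
    rw [hBt, ← Matrix.mulVec_mulVec, hBev, Matrix.mulVec_smul, hBev, smul_smul]
    ring_nf
  have hnA : nuclearNorm A = ∑ i, |lam i| := by
    rw [nuclearNorm,
      sum_f_eigenvalues_eq (Aᴴ * A) (Matrix.isHermitian_conjTranspose_mul_self A) w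
        (fun i => lam i ^ 2) hortho hAev2 Real.sqrt]
    exact Finset.sum_congr rfl fun i _ => Real.sqrt_sq_eq_abs (lam i)
  have hnB : nuclearNorm B = ∑ i, |μB i| := by
    rw [nuclearNorm,
      sum_f_eigenvalues_eq (Bᴴ * B) (Matrix.isHermitian_conjTranspose_mul_self B) w
        (fun i => μB i ^ 2) hortho hBev2 Real.sqrt]
    exact Finset.sum_congr rfl fun i _ => Real.sqrt_sq_eq_abs (μB i)
  have hsum : ∑ i, |μB i| = (∑ i, |lam i|) - |lam z| := by
    have : ∀ i : Fin p, |μB i| = |lam i| - (if i = z then |lam z| else 0) := by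
      intro i
      by_cases h : i = z
      · subst h; simp [hμB]
      · simp [hμB, h]
    rw [Finset.sum_congr rfl fun i _ => this i, Finset.sum_sub_distrib,
      Finset.sum_ite_eq' Finset.univ z fun _ => |lam z|, if_pos (Finset.mem_univ z)]
  have hSle : ∑ i, |lam i| ≤ (p : ℝ) * |lam z| := by
    calc ∑ i, |lam i| ≤ ∑ _i : Fin p, |lam z| :=
          Finset.sum_le_sum fun i _ => hord z i (by simp [hz, Fin.le_def])
    _ = (p : ℝ) * |lam z| := by simp [mul_comm]
  have hppos : (0 : ℝ) < p := by exact_mod_cast hp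
  rw [hnA, hnB, hsum]
  have h1 : (1 - 1 / (p : ℝ)) * ∑ i, |lam i| = (∑ i, |lam i|) - (∑ i, |lam i|) / p := by
    field_simp
  rw [h1]
  have h2 : (∑ i, |lam i|) / p ≤ |lam z| := by
    rw [div_le_iff₀ hppos]
    linarith [hSle]
  linarith
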